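/- A strictly positive kernel K : ℤ² → (0,∞) admits detailed balancing if and only if it satisfies the extended Becker–Döring assumption, i.e. K(k,l−1)/K(l,k−1) = K(k,0)K(1,l−1)/(K(l,0)K(1,k−1)) for k,l ≥ 1; = (K(0,l−1)/K(0,k−1))·(K(k,−1)/K(l,−1)) for k,l ≤ 0; = (K(k,0)/K(1,k−1))·(K(0,l−1)/K(l,−1))·(K(1,−1)/K(0,0)) for k ≥ 1, l ≤ 0; and = (K(1,l−1)/K(l,0))·(K(k,−1)/K(0,k−1))·(K(0,0)/K(1,−1)) for k ≤ 0, l ≥ 1. -/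

import Mathlib

noncomputable def gTel (h : ℤ → ℝ) : ℤ → ℝ := fun n =>
  if 0 ≤ n then ∏ i ∈ Finset.range n.toNat, h ((i : ℤ) + 1)
  else (∏ i ∈ Finset.range (-n).toNat, h (-(i : ℤ)))⁻¹

lemma gTel_pos (h : ℤ → ℝ) (hh : ∀ k, 0 < h k) : ∀ k, 0 < gTel h k := by
  intro k
  unfold gTel
  split
  · exact Finset.prod_pos fun i _ => hh _
  · exact inv_pos.mpr (Finset.prod_pos fun i _ => hh _)

lemma gTel_neg (h : ℤ → ℝ) (k : ℤ) (hk : k ≤ 0) :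
    gTel h k = (∏ i ∈ Finset.range (-k).toNat, h (-(i : ℤ)))⁻¹ := by
  unfold gTel
  split
  · have : k = 0 := le_antisymm hk (by assumption)
    subst this
    simp
  · rfl

lemma gTel_step (h : ℤ → ℝ) (hh : ∀ k, 0 < h k) (k : ℤ) :
    gTel h k = h k * gTel h (k - 1) := by
  rcases le_or_gt k 0 with hk | hk
  · rw [gTel_neg h k hk, gTel_neg h (k - 1) (by omega)]
    have hm : (-(k - 1)).toNat = (-k).toNat + 1 := by omega
    rw [hm, Finset.prod_range_succ]
    have he : -(((-k).toNat : ℤ)) = k := by omega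
    rw [he, mul_inv]
    rw [mul_comm, mul_assoc, inv_mul_cancel₀ (hh k).ne', mul_one]
  · have h0 : (0:ℤ) ≤ k := by omega
    have h1 : (0:ℤ) ≤ k - 1 := by omega
    unfold gTel
    rw [if_pos h0, if_pos h1]
    have hm : k.toNat = (k - 1).toNat + 1 := by omega
    rw [hm, Finset.prod_range_succ]
    have he : (((k - 1).toNat : ℤ)) + 1 = k := by omega
    rw [he, mul_comm]

theorem detailed_balancing_iff_extended_BeckerDoering (K : ℤ → ℤ → ℝ)
    (hK : ∀ k l, 0 < K k l) :
    (∃ g : ℤ → ℝ, (∀ k, 0 < g k) ∧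
        ∀ k l : ℤ, K k (l - 1) * g k * g (l - 1) = K l (k - 1) * g l * g (k - 1)) ↔
      ((∀ k l : ℤ, 1 ≤ k → 1 ≤ l →
          K k (l - 1) / K l (k - 1) = K k 0 * K 1 (l - 1) / (K l 0 * K 1 (k - 1))) ∧
        (∀ k l : ℤ, k ≤ 0 → l ≤ 0 →
          K k (l - 1) / K l (k - 1) = K 0 (l - 1) / K 0 (k - 1) * (K k (-1) / K l (-1))) ∧
        (∀ k l : ℤ, 1 ≤ k → l ≤ 0 →
          K k (l - 1) / K l (k - 1) =
            K k 0 / K 1 (k - 1) * (K 0 (l - 1) / K l (-1)) * (K 1 (-1) / K 0 0)) ∧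
        (∀ k l : ℤ, k ≤ 0 → 1 ≤ l →
          K k (l - 1) / K l (k - 1) =
            K 1 (l - 1) / K l 0 * (K k (-1) / K 0 (k - 1)) * (K 0 0 / K 1 (-1)))) := by
  constructor
  · rintro ⟨g, hg, hgk⟩
    have hgne : ∀ k, g k ≠ 0 := fun k => (hg k).ne'
    have hr : ∀ k l : ℤ, K k (l - 1) / K l (k - 1) = (g l * g (k - 1)) / (g k * g (l - 1)) := by
      intro k l
      rw [div_eq_div_iff (hK _ _).ne' (mul_pos (hg _) (hg _)).ne']
      linear_combination hgk k l
    have hrk1 : ∀ k : ℤ, K k 0 / K 1 (k - 1) = (g 1 * g (k - 1)) / (g k * g 0) := by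
      intro k
      have := hr k 1
      norm_num at this
      exact this
    have hr1l : ∀ l : ℤ, K 1 (l - 1) / K l 0 = (g l * g 0) / (g 1 * g (l - 1)) := by
      intro l
      have := hr 1 l
      norm_num at this
      exact this
    have hr0l : ∀ l : ℤ, K 0 (l - 1) / K l (-1) = (g l * g (-1)) / (g 0 * g (l - 1)) := by
      intro l
      have := hr 0 l
      norm_num at this
      exact this
    have hrk0 : ∀ k : ℤ, K k (-1) / K 0 (k - 1) = (g 0 * g (k - 1)) / (g k * g (-1)) := by
      intro k
      have := hr k 0
      norm_num at this
      exact this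
    have hr10 : K 1 (-1) / K 0 0 = (g 0 * g 0) / (g 1 * g (-1)) := by
      have := hr 1 0
      norm_num at this
      exact this
    have hr01 : K 0 0 / K 1 (-1) = (g 1 * g (-1)) / (g 0 * g 0) := by
      have := hr 0 1
      norm_num at this
      exact this
    refine ⟨fun k l _ _ => ?_, fun k l _ _ => ?_, fun k l _ _ => ?_, fun k l _ _ => ?_⟩
    · calc K k (l - 1) / K l (k - 1) = (g l * g (k - 1)) / (g k * g (l - 1)) := hr k l
        _ = ((g 1 * g (k - 1)) / (g k * g 0)) * ((g l * g 0) / (g 1 * g (l - 1))) := by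
            field_simp [hgne 0, hgne 1, hgne k, hgne l, hgne (k - 1), hgne (l - 1)]
        _ = (K k 0 / K 1 (k - 1)) * (K 1 (l - 1) / K l 0) := by rw [hrk1 k, hr1l l]
        _ = K k 0 * K 1 (l - 1) / (K l 0 * K 1 (k - 1)) := by ring
    · calc K k (l - 1) / K l (k - 1) = (g l * g (k - 1)) / (g k * g (l - 1)) := hr k l
        _ = ((g l * g (-1)) / (g 0 * g (l - 1))) * ((g 0 * g (k - 1)) / (g k * g (-1))) := by
            field_simp [hgne 0, hgne (-1), hgne k, hgne l, hgne (k - 1), hgne (l - 1)]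
        _ = (K 0 (l - 1) / K l (-1)) * (K k (-1) / K 0 (k - 1)) := by rw [hr0l l, hrk0 k]
        _ = K 0 (l - 1) / K 0 (k - 1) * (K k (-1) / K l (-1)) := by ring
    · calc K k (l - 1) / K l (k - 1) = (g l * g (k - 1)) / (g k * g (l - 1)) := hr k l
        _ = ((g 1 * g (k - 1)) / (g k * g 0)) * ((g l * g (-1)) / (g 0 * g (l - 1)))
              * ((g 0 * g 0) / (g 1 * g (-1))) := by
            field_simp [hgne 0, hgne 1, hgne (-1), hgne k, hgne l, hgne (k - 1), hgne (l - 1)]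
        _ = (K k 0 / K 1 (k - 1)) * (K 0 (l - 1) / K l (-1)) * (K 1 (-1) / K 0 0) := by
            rw [hrk1 k, hr0l l, hr10]
    · calc K k (l - 1) / K l (k - 1) = (g l * g (k - 1)) / (g k * g (l - 1)) := hr k l
        _ = ((g l * g 0) / (g 1 * g (l - 1))) * ((g 0 * g (k - 1)) / (g k * g (-1)))
              * ((g 1 * g (-1)) / (g 0 * g 0)) := by
            field_simp [hgne 0, hgne 1, hgne (-1), hgne k, hgne l, hgne (k - 1), hgne (l - 1)]
        _ = (K 1 (l - 1) / K l 0) * (K k (-1) / K 0 (k - 1)) * (K 0 0 / K 1 (-1)) := by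
            rw [hr1l l, hrk0 k, hr01]
  · rintro ⟨h1, h2, h3, h4⟩
    have hKne : ∀ k l, K k l ≠ 0 := fun k l => (hK k l).ne'
    set h : ℤ → ℝ := fun k =>
      if 1 ≤ k then K 1 (k - 1) / K k 0 * K 0 0 else K 0 (k - 1) / K k (-1) * K 1 (-1) with hdef
    have hpos : ∀ k, 0 < h k := by
      intro k
      simp only [hdef]
      split
      · exact mul_pos (div_pos (hK _ _) (hK _ _)) (hK _ _)
      · exact mul_pos (div_pos (hK _ _) (hK _ _)) (hK _ _)
    have key : ∀ k l : ℤ, K k (l - 1) * h k = K l (k - 1) * h l := by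
      intro k l
      simp only [hdef]
      rcases le_or_gt 1 k with hk | hk <;> rcases le_or_gt 1 l with hl | hl
      · rw [if_pos hk, if_pos hl]
        have := h1 k l hk hl
        field_simp [hKne] at this ⊢
        linear_combination this
      · rw [if_pos hk, if_neg (by omega)]
        have := h3 k l hk (by omega)
        field_simp [hKne] at this ⊢
        linear_combination this
      · rw [if_neg (by omega), if_pos hl]
        have := h4 k l (by omega) hl
        field_simp [hKne] at this ⊢
        linear_combination this
      · rw [if_neg (by omega), if_neg (by omega)]
        have := h2 k l (by omega) (by omega)
        field_simp [hKne] at this ⊢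
        linear_combination this
    refine ⟨gTel h, gTel_pos h hpos, fun k l => ?_⟩
    rw [gTel_step h hpos k, gTel_step h hpos l]
    linear_combination (gTel h (k - 1) * gTel h (l - 1)) * key k l
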